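/- Let B = B0 + B1ε ∈ DQ^{k×l} and C = C0 + C1ε ∈ DQ^{n×l} be dual quaternion matrices. Set B2 = R_{B0}·B1, C2 = C1 − C0·B0†·B1, B00 = B2·L_{B0}, C00 = C2·L_{B0}. Then the dual quaternion matrix equation YB = C has a solution Y ∈ DQ^{n×k} if and only if C0·L_{B0} = 0 and C00·L_{B00} = 0. -/
import Mathlib


open Matrix

/-- Quaternion matrices of size `p × q`. -/
abbrev QM (p q : ℕ) := Matrix (Fin p) (Fin q) (Quaternion ℝ)

/-- `Ad` is a Moore–Penrose inverse of the quaternion matrix `A`. -/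
def IsMP {p q : ℕ} (A : QM p q) (Ad : QM q p) : Prop :=
  A * Ad * A = A ∧ Ad * A * Ad = Ad ∧ (A * Ad)ᴴ = A * Ad ∧ (Ad * A)ᴴ = Ad * A

/-- The dual quaternion matrix `A0 + A1 ε`, realized as a matrix over the
dual numbers (dual quaternions) `DualNumber (Quaternion ℝ)`. -/
noncomputable def dm {p q : ℕ} (A0 A1 : QM p q) :
    Matrix (Fin p) (Fin q) (DualNumber (Quaternion ℝ)) :=
  A0.map TrivSqZeroExt.inl + A1.map TrivSqZeroExt.inr

/-- The rank of a quaternion matrix: the dimension (over `ℍ`) of the left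
`ℍ`-submodule spanned by its rows. -/
noncomputable def qrank {m n : Type*} (A : Matrix m n (Quaternion ℝ)) : ℕ :=
  Module.finrank (Quaternion ℝ)
    (Submodule.span (Quaternion ℝ) (Set.range (fun i : m => fun j : n => A i j)))

lemma dm_fst {p q : ℕ} (A0 A1 : QM p q) (i j) : ((dm A0 A1) i j).fst = A0 i j := by simp [dm]
lemma dm_snd {p q : ℕ} (A0 A1 : QM p q) (i j) : ((dm A0 A1) i j).snd = A1 i j := by simp [dm]

lemma dm_eta {p q : ℕ} (Y : Matrix (Fin p) (Fin q) (DualNumber (Quaternion ℝ))) :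
    Y = dm (Y.map TrivSqZeroExt.fst) (Y.map TrivSqZeroExt.snd) :=
  Matrix.ext fun i j => TrivSqZeroExt.ext (by simp [dm_fst]) (by simp [dm_snd])

lemma dm_inj {p q : ℕ} {A0 A1 C0 C1 : QM p q} (h : dm A0 A1 = dm C0 C1) :
    A0 = C0 ∧ A1 = C1 := by
  constructor <;> refine Matrix.ext fun i j => ?_
  · have := congrArg (fun M => (M i j).fst) h; simpa [dm_fst] using this
  · have := congrArg (fun M => (M i j).snd) h; simpa [dm_snd] using this

lemma dm_mul {p q r : ℕ} (A0 A1 : QM p q) (B0 B1 : QM q r) :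
    dm A0 A1 * dm B0 B1 = dm (A0*B0) (A0*B1 + A1*B0) := by
  refine Matrix.ext fun i j => TrivSqZeroExt.ext ?_ ?_
  · rw [Matrix.mul_apply, TrivSqZeroExt.fst_sum, dm_fst]
    simp [TrivSqZeroExt.fst_mul, dm_fst, Matrix.mul_apply]
  · rw [Matrix.mul_apply, TrivSqZeroExt.snd_sum, dm_snd]
    simp only [TrivSqZeroExt.snd_mul, dm_fst, dm_snd, smul_eq_mul, MulOpposite.smul_eq_mul_unop,
      MulOpposite.unop_op, Matrix.add_apply, Matrix.mul_apply]
    rw [Finset.sum_add_distrib]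

/-- solvability of the dual quaternion matrix equation `Y B = C`. -/
theorem stmt14 {k l n : ℕ}
    (B0 B1 : QM k l) (C0 C1 : QM n l)
    (B0d : QM l k) (hB0d : IsMP B0 B0d)
    (B2 : QM k l) (hB2 : B2 = (1 - B0 * B0d) * B1)
    (C2 : QM n l) (hC2 : C2 = C1 - C0 * B0d * B1)
    (B00 : QM k l) (hB00 : B00 = B2 * (1 - B0d * B0))
    (B00d : QM l k) (hB00d : IsMP B00 B00d)
    (C00 : QM n l) (hC00 : C00 = C2 * (1 - B0d * B0)) :
    (∃ Y : Matrix (Fin n) (Fin k) (DualNumber (Quaternion ℝ)),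
        Y * dm B0 B1 = dm C0 C1) ↔
      (C0 * (1 - B0d * B0) = 0 ∧ C00 * (1 - B00d * B00) = 0) := by
  obtain ⟨p1, p2, p3, p4⟩ := hB0d
  obtain ⟨q1, q2, q3, q4⟩ := hB00d
  have p1' : B0 * (B0d * B0) = B0 := by rw [← Matrix.mul_assoc, p1]
  have hB0L : B0 * (1 - B0d * B0) = 0 := by
    rw [Matrix.mul_sub, Matrix.mul_one, p1', sub_self]
  have hRB0 : (1 - B0 * B0d) * B0 = 0 := by
    rw [Matrix.sub_mul, Matrix.one_mul, p1, sub_self]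
  have hB00HB0 : B00ᴴ * B0 = 0 := by
    rw [hB00, hB2]
    simp only [conjTranspose_mul, conjTranspose_sub, conjTranspose_one, p3]
    rw [Matrix.mul_assoc, Matrix.mul_assoc, hRB0, Matrix.mul_zero, Matrix.mul_zero]
  have hB00dB0 : B00d * B0 = 0 := by
    have h5 : B00d = B00d * (B00dᴴ * B00ᴴ) := by
      rw [← conjTranspose_mul, q3, ← Matrix.mul_assoc, q2]
    have h6 : B00d * B0 = B00d * (B00dᴴ * B00ᴴ) * B0 := by rw [← h5]
    rw [h6, Matrix.mul_assoc, Matrix.mul_assoc, hB00HB0, Matrix.mul_zero, Matrix.mul_zero]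
  have h7 : B00 = B1 * (1 - B0d * B0) - B0 * (B0d * (B1 * (1 - B0d * B0))) := by
    rw [hB00, hB2, Matrix.sub_mul, Matrix.one_mul, Matrix.sub_mul,
      Matrix.mul_assoc, Matrix.mul_assoc]
  have hB00dM : B00d * B00 = B00d * (B1 * (1 - B0d * B0)) := by
    have hz0 : B00d * (B0 * (B0d * (B1 * (1 - B0d * B0)))) = 0 := by
      rw [← Matrix.mul_assoc, hB00dB0, Matrix.zero_mul]
    rw [h7, Matrix.mul_sub, hz0, sub_zero]
  constructor
  · rintro ⟨Y, hY⟩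
    set Y0 := Y.map TrivSqZeroExt.fst with hY0
    set Y1 := Y.map TrivSqZeroExt.snd with hY1
    rw [dm_eta Y, ← hY0, ← hY1, dm_mul] at hY
    obtain ⟨e0, e1⟩ := dm_inj hY
    constructor
    · rw [← e0, Matrix.mul_assoc, hB0L, Matrix.mul_zero]
    · have hC00' : C00 = Y0 * B00 := by
        rw [hC00, hC2, ← e0, ← e1, h7]
        simp only [Matrix.sub_mul, Matrix.add_mul, Matrix.mul_sub, Matrix.mul_add,
          Matrix.mul_assoc, Matrix.mul_one, Matrix.one_mul, Matrix.mul_zero,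
          Matrix.zero_mul, p1', sub_self, add_zero, zero_add, sub_zero]
        abel
      have hz : B00 * (1 - B00d * B00) = 0 := by
        rw [Matrix.mul_sub, Matrix.mul_one, ← Matrix.mul_assoc, q1, sub_self]
      rw [hC00', Matrix.mul_assoc, hz, Matrix.mul_zero]
  · rintro ⟨hc0, hc00⟩
    have hc0' : C0 * (B0d * B0) = C0 := by
      rw [Matrix.mul_sub, Matrix.mul_one, sub_eq_zero] at hc0
      exact hc0.symm
    have hY0B0 : (C0 * B0d + C00 * B00d) * B0 = C0 := by
      rw [Matrix.add_mul, Matrix.mul_assoc, Matrix.mul_assoc, hB00dB0,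
        Matrix.mul_zero, add_zero, hc0']
    have key : (C1 - (C0 * B0d + C00 * B00d) * B1) * (1 - B0d * B0) = 0 := by
      have s1 : (C1 - (C0 * B0d + C00 * B00d) * B1) * (1 - B0d * B0)
          = (C1 - C0 * B0d * B1) * (1 - B0d * B0)
            - C00 * (B00d * (B1 * (1 - B0d * B0))) := by
        simp only [Matrix.sub_mul, Matrix.add_mul, Matrix.mul_assoc]
        abel
      rw [Matrix.mul_sub, Matrix.mul_one] at hc00
      rw [s1, ← hB00dM, ← hC2, ← hC00]
      exact hc00
    rw [Matrix.mul_sub, Matrix.mul_one, sub_eq_zero] at key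
    have hY1B0 : ((C1 - (C0 * B0d + C00 * B00d) * B1) * B0d) * B0
        = C1 - (C0 * B0d + C00 * B00d) * B1 := by
      rw [Matrix.mul_assoc, ← key]
    refine ⟨dm (C0 * B0d + C00 * B00d) ((C1 - (C0 * B0d + C00 * B00d) * B1) * B0d), ?_⟩
    have fin : (C0 * B0d + C00 * B00d) * B1
        + (C1 - (C0 * B0d + C00 * B00d) * B1) = C1 := by abel
    rw [dm_mul, hY0B0, hY1B0, fin]
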